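/- Let g : ℝ → ℝ and let (a_n)_{n≥0} be a real sequence with a_0 = 1 such that for every N ≥ 0, g(x) − Σ_{n=0}^{N} a_n x^{−n} = O(x^{−(N+1)}) as x → ∞. Let p be a real number and define the sequence (b_n(p)) by b_0(p) = 1 and b_n(p) = (1/n) Σ_{k=1}^{n} [k(1+p) − n] a_k b_{n−k}(p) for n ≥ 1. Then for every N ≥ 0, g(x)^p − Σ_{n=0}^{N} b_n(p) x^{−n} = O(x^{−(N+1)}) as x → ∞ (here g(x)^p is the real power, which is well defined since g(x) → 1, so g is eventually positive). -/

import Mathlib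

open Finset Filter Asymptotics
open PowerSeries




noncomputable def gbinom (p : ℝ) (j : ℕ) : ℝ :=
  (∏ i ∈ Finset.range j, (p - i)) / (j.factorial : ℝ)

lemma gbinom_zero (p : ℝ) : gbinom p 0 = 1 := by simp [gbinom]

lemma gbinom_succ (p : ℝ) (j : ℕ) :
    gbinom p (j + 1) = gbinom p j * (p - j) / (j + 1) := by
  simp only [gbinom, Finset.prod_range_succ, Nat.factorial_succ]
  rw [div_mul_eq_mul_div, div_div]
  congr 1
  push_cast
  ring

lemma succ_mul_gbinom (p : ℝ) (j : ℕ) :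
    ((j : ℝ) + 1) * gbinom p (j + 1) = p * gbinom (p - 1) j := by
  have h : ∏ i ∈ Finset.range (j + 1), (p - i) = p * ∏ i ∈ Finset.range j, (p - 1 - i) := by
    rw [Finset.prod_range_succ']
    simp only [Nat.cast_zero, sub_zero]
    rw [mul_comm]
    congr 1
    apply Finset.prod_congr rfl
    intro i _
    push_cast
    ring
  simp only [gbinom, h, Nat.factorial_succ]
  push_cast
  have hj : (j.factorial : ℝ) ≠ 0 := by exact_mod_cast j.factorial_ne_zero
  field_simp

lemma gbinom_pascal (p : ℝ) (j : ℕ) :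
    gbinom p (j + 1) = gbinom (p - 1) (j + 1) + gbinom (p - 1) j := by
  have h1 := succ_mul_gbinom p j
  have h2 : gbinom (p - 1) (j + 1) = gbinom (p - 1) j * (p - 1 - j) / (j + 1) :=
    gbinom_succ _ _
  have hj : ((j : ℝ) + 1) ≠ 0 := by positivity
  have h3 : gbinom p (j+1) = p * gbinom (p-1) j / (j+1) := by
    rw [eq_div_iff hj]; linarith [h1]
  rw [h3, h2, div_add' _ _ _ hj]
  congr 1
  ring

lemma hasDerivAt_one_add_rpow (q : ℝ) (u : ℝ) (hu : 1 + u ≠ 0) :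
    HasDerivAt (fun v : ℝ => (1 + v) ^ q) (q * (1 + u) ^ (q - 1)) u := by
  have h1 : HasDerivAt (fun v : ℝ => 1 + v) 1 u := (hasDerivAt_id u).const_add 1
  have h2 : HasDerivAt (fun y : ℝ => y ^ q) (q * (1 + u) ^ (q - 1)) (1 + u) :=
    Real.hasDerivAt_rpow_const (Or.inl hu)
  have h3 := h2.comp u h1
  rw [mul_one] at h3
  exact h3

lemma sum_eval_zero (M : ℕ) (q : ℝ) :
    (∑ j ∈ Finset.range (M + 1), gbinom q j * (0:ℝ) ^ j) = 1 := by
  rw [Finset.sum_eq_single 0]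
  · simp [gbinom_zero]
  · intro j _ hj
    simp [zero_pow hj]
  · simp

lemma rpow_taylor (M : ℕ) : ∀ q : ℝ,
    (fun u : ℝ => (1 + u) ^ q - ∑ j ∈ Finset.range (M + 1), gbinom q j * u ^ j)
      =O[nhds (0:ℝ)] fun u => u ^ (M + 1) := by
  induction M with
  | zero =>
    intro q
    have h := (hasDerivAt_one_add_rpow q 0 (by norm_num)).isBigO_sub
    have h2 : (fun u : ℝ => (1 + u) ^ q - ∑ j ∈ Finset.range 1, gbinom q j * u ^ j)
        = fun u : ℝ => (1 + u) ^ q - (1 + 0) ^ q := by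
      funext u
      norm_num [gbinom_zero, Real.one_rpow]
    rw [h2]
    simpa using h
  | succ M IH =>
    intro q
    obtain ⟨c, hc⟩ := isBigO_iff.mp (IH (q - 1))
    have hc' : ∀ᶠ u in nhds (0:ℝ),
        ‖(1 + u) ^ (q - 1) - ∑ j ∈ Finset.range (M + 1), gbinom (q - 1) j * u ^ j‖
          ≤ max c 0 * ‖u ^ (M + 1)‖ := by
      filter_upwards [hc] with u hu
      exact hu.trans (mul_le_mul_of_nonneg_right (le_max_left _ _) (norm_nonneg _))
    rw [Metric.eventually_nhds_iff] at hc'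
    obtain ⟨ε, hε, hcb⟩ := hc'
    set c₀ := max c 0 with hc₀def
    have hc₀ : 0 ≤ c₀ := le_max_right _ _
    set δ := min ε (1/2) with hδdef
    have hδ : 0 < δ := lt_min hε (by norm_num)
    set f : ℝ → ℝ :=
      fun u => (1 + u) ^ q - ∑ j ∈ Finset.range (M + 2), gbinom q j * u ^ j with hf
    have hderiv : ∀ u ∈ Metric.ball (0:ℝ) δ, HasDerivAt f
        (q * ((1 + u) ^ (q - 1) - ∑ j ∈ Finset.range (M + 1), gbinom (q - 1) j * u ^ j)) u := by
      intro u hu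
      simp only [Metric.mem_ball, Real.dist_eq, sub_zero] at hu
      have hu2 : |u| < 1/2 := lt_of_lt_of_le hu (min_le_right _ _)
      have hpos : 0 < 1 + u := by
        rcases abs_lt.mp hu2 with ⟨h1, h2⟩; linarith
      have h1 : HasDerivAt (fun v : ℝ => (1 + v) ^ q) (q * (1 + u) ^ (q - 1)) u :=
        hasDerivAt_one_add_rpow q u hpos.ne'
      have h2 : HasDerivAt (fun v : ℝ => ∑ j ∈ Finset.range (M + 2), gbinom q j * v ^ j)
          (∑ j ∈ Finset.range (M + 2), gbinom q j * (j * u ^ (j - 1))) u :=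
        HasDerivAt.fun_sum fun j _ => (hasDerivAt_pow j u).const_mul (gbinom q j)
      have hsum : (∑ j ∈ Finset.range (M + 2), gbinom q j * (j * u ^ (j - 1)))
          = q * ∑ j ∈ Finset.range (M + 1), gbinom (q - 1) j * u ^ j := by
        rw [Finset.sum_range_succ']
        simp only [Nat.cast_zero, zero_mul, mul_zero, add_zero]
        rw [Finset.mul_sum]
        apply Finset.sum_congr rfl
        intro j _
        have hgb := succ_mul_gbinom q j
        have h7 : (j + 1 - 1) = j := rfl
        rw [h7]
        push_cast
        linear_combination hgb * u ^ j
      have h3 := h1.fun_sub h2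
      rw [hsum] at h3
      exact h3.congr_deriv (by ring)
    have key : ∀ u : ℝ, |u| < δ → |f u| ≤ |q| * c₀ * |u| ^ (M + 2) := by
      intro u hu
      have huball : u ∈ Metric.ball (0:ℝ) δ := by
        simp [Real.dist_eq, hu]
      have h0ball : (0:ℝ) ∈ Metric.ball (0:ℝ) δ := by simp [hδ]
      have hseg : segment ℝ (0:ℝ) u ⊆ Metric.ball (0:ℝ) δ :=
        (convex_ball 0 δ).segment_subset h0ball huball
      have hC : ∀ t ∈ segment ℝ (0:ℝ) u,
          ‖q * ((1 + t) ^ (q - 1) - ∑ j ∈ Finset.range (M + 1), gbinom (q - 1) j * t ^ j)‖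
            ≤ |q| * c₀ * |u| ^ (M + 1) := by
        intro t ht
        have htu : |t| ≤ |u| := by
          rcases ht with ⟨α, β, hα, hβ, hαβ, hts⟩
          have ht2 : t = β * u := by rw [← hts]; simp
          rw [ht2, abs_mul]
          have hβa : |β| = β := abs_of_nonneg hβ
          nlinarith [abs_nonneg u]
        have htb : dist t 0 < ε := by
          have h4 := hseg ht
          simp only [Metric.mem_ball] at h4
          exact lt_of_lt_of_le h4 (min_le_left _ _)
        have h5 := hcb htb
        simp only [norm_pow, Real.norm_eq_abs] at h5
        rw [norm_mul, Real.norm_eq_abs, Real.norm_eq_abs]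
        have h6 : |t| ^ (M+1) ≤ |u| ^ (M+1) := pow_le_pow_left₀ (abs_nonneg t) htu _
        calc |q| * |(1 + t) ^ (q-1) - ∑ j ∈ Finset.range (M + 1), gbinom (q - 1) j * t ^ j|
            ≤ |q| * (c₀ * |t| ^ (M + 1)) :=
              mul_le_mul_of_nonneg_left h5 (abs_nonneg q)
          _ ≤ |q| * (c₀ * |u| ^ (M + 1)) := by
              have := mul_le_mul_of_nonneg_left h6 hc₀
              exact mul_le_mul_of_nonneg_left this (abs_nonneg q)
          _ = |q| * c₀ * |u| ^ (M + 1) := by ring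
      have hmvt := (convex_segment (0:ℝ) u).norm_image_sub_le_of_norm_hasDerivWithin_le
        (fun t ht => (hderiv t (hseg ht)).hasDerivWithinAt) hC
        (left_mem_segment ℝ (0:ℝ) u) (right_mem_segment ℝ (0:ℝ) u)
      have hf0 : f 0 = 0 := by
        simp only [hf]
        rw [sum_eval_zero (M + 1) q]
        norm_num [Real.one_rpow]
      rw [hf0, sub_zero] at hmvt
      simp only [Real.norm_eq_abs, sub_zero] at hmvt
      calc |f u| ≤ |q| * c₀ * |u| ^ (M + 1) * |u| := hmvt
        _ = |q| * c₀ * |u| ^ (M + 2) := by rw [pow_succ]; ring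
    rw [isBigO_iff]
    refine ⟨|q| * c₀, ?_⟩
    rw [Metric.eventually_nhds_iff]
    refine ⟨δ, hδ, fun u hu => ?_⟩
    simp only [Real.dist_eq, sub_zero] at hu
    simpa [abs_pow] using key u hu

noncomputable def Tser (a : ℕ → ℝ) : PowerSeries ℝ :=
  PowerSeries.mk fun k => if k = 0 then 0 else a k

noncomputable def tt (a : ℕ → ℝ) (j n : ℕ) : ℝ :=
  PowerSeries.coeff n ((Tser a) ^ j)

noncomputable def cc (a : ℕ → ℝ) (p : ℝ) (n : ℕ) : ℝ :=
  ∑ j ∈ Finset.range (n + 1), gbinom p j * tt a j n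

lemma X_dvd_Tser (a : ℕ → ℝ) : (PowerSeries.X : PowerSeries ℝ) ∣ Tser a := by
  rw [PowerSeries.X_dvd_iff]
  simp [Tser]

lemma tt_eq_zero (a : ℕ → ℝ) {j n : ℕ} (h : n < j) : tt a j n = 0 := by
  have : (PowerSeries.X : PowerSeries ℝ) ^ j ∣ (Tser a) ^ j :=
    pow_dvd_pow_of_dvd (X_dvd_Tser a) j
  exact PowerSeries.X_pow_dvd_iff.mp this n h

lemma tt_zero (a : ℕ → ℝ) (n : ℕ) : tt a 0 n = if n = 0 then 1 else 0 := by
  simp [tt, PowerSeries.coeff_one]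

lemma cc_zero (a : ℕ → ℝ) (p : ℝ) : cc a p 0 = 1 := by
  simp [cc, tt_zero, gbinom_zero]

noncomputable def Fser (a : ℕ → ℝ) (p : ℝ) (M : ℕ) : PowerSeries ℝ :=
  ∑ j ∈ Finset.range (M + 1), PowerSeries.C (gbinom p j) * (Tser a) ^ j

lemma coeff_Fser (a : ℕ → ℝ) (p : ℝ) {n M : ℕ} (h : n ≤ M) :
    PowerSeries.coeff n (Fser a p M) = cc a p n := by
  rw [Fser, map_sum, cc]
  rw [← Finset.sum_subset (Finset.range_subset_range.mpr (by omega : n + 1 ≤ M + 1))]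
  · apply Finset.sum_congr rfl
    intro j _
    rw [PowerSeries.coeff_C_mul, tt]
  · intro j hj2 hj
    rw [PowerSeries.coeff_C_mul,
      show (PowerSeries.coeff n) (Tser a ^ j) = tt a j n from rfl,
      tt_eq_zero a (show n < j by simp at hj; omega), mul_zero]

lemma derivativeFun_sum (s : Finset ℕ) (f : ℕ → PowerSeries ℝ) :
    PowerSeries.derivativeFun (∑ j ∈ s, f j) = ∑ j ∈ s, PowerSeries.derivativeFun (f j) :=
  map_sum (PowerSeries.derivative ℝ).toLinearMap f s

lemma derivativeFun_pow (S : PowerSeries ℝ) (j : ℕ) :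
    PowerSeries.derivativeFun (S ^ (j + 1))
      = PowerSeries.C ((j : ℝ) + 1) * S ^ j * PowerSeries.derivativeFun S := by
  induction j with
  | zero => simp
  | succ j IH =>
    have : S ^ (j + 2) = S * S ^ (j + 1) := by ring
    rw [this, PowerSeries.derivativeFun_mul, IH]
    simp only [smul_eq_mul]
    push_cast
    have hC : (PowerSeries.C) ((j:ℝ) + 1 + 1) = (PowerSeries.C) ((j:ℝ) + 1) + 1 := by
      rw [map_add, map_one]
    rw [hC]
    ring

lemma derivativeFun_C_mul (r : ℝ) (S : PowerSeries ℝ) :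
    PowerSeries.derivativeFun (PowerSeries.C r * S)
      = PowerSeries.C r * PowerSeries.derivativeFun S := by
  rw [PowerSeries.derivativeFun_mul,
    show PowerSeries.derivativeFun (PowerSeries.C r) = 0 from PowerSeries.derivative_C]
  simp [smul_eq_mul]

noncomputable def Gser (a : ℕ → ℝ) (p : ℝ) (M : ℕ) : PowerSeries ℝ :=
  ∑ j ∈ Finset.range (M + 1), PowerSeries.C (gbinom (p - 1) j) * (Tser a) ^ j

lemma dFser_eq (a : ℕ → ℝ) (p : ℝ) (M : ℕ) :
    PowerSeries.derivativeFun (Fser a p (M + 1))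
      = PowerSeries.C p * PowerSeries.derivativeFun (Tser a) * Gser a p M := by
  rw [Fser, derivativeFun_sum]
  rw [Finset.sum_range_succ']
  have h0 : PowerSeries.derivativeFun (PowerSeries.C (gbinom p 0) * (Tser a) ^ 0)
      = 0 := by
    rw [pow_zero, mul_one]
    exact PowerSeries.derivative_C
  rw [h0, add_zero, Gser, Finset.mul_sum]
  apply Finset.sum_congr rfl
  intro j _
  rw [derivativeFun_C_mul, derivativeFun_pow]
  have hgb := succ_mul_gbinom p j
  have hC : PowerSeries.C (gbinom p (j+1)) * (PowerSeries.C ((j:ℝ) + 1))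
      = PowerSeries.C p * PowerSeries.C (gbinom (p-1) j) := by
    rw [← map_mul, ← map_mul]
    congr 1
    linear_combination hgb
  calc PowerSeries.C (gbinom p (j+1)) * (PowerSeries.C ((j:ℝ)+1) * (Tser a)^j
        * PowerSeries.derivativeFun (Tser a))
      = (PowerSeries.C (gbinom p (j+1)) * PowerSeries.C ((j:ℝ)+1)) * (Tser a)^j
        * PowerSeries.derivativeFun (Tser a) := by ring
    _ = (PowerSeries.C p * PowerSeries.C (gbinom (p-1) j)) * (Tser a)^j
        * PowerSeries.derivativeFun (Tser a) := by rw [hC]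
    _ = _ := by ring

lemma one_add_T_mul_Gser (a : ℕ → ℝ) (p : ℝ) (M : ℕ) :
    (1 + Tser a) * Gser a p M
      = Fser a p M + PowerSeries.C (gbinom (p - 1) M) * (Tser a) ^ (M + 1) := by
  have hTG : Tser a * Gser a p M
      = ∑ j ∈ Finset.range (M + 1), PowerSeries.C (gbinom (p-1) j) * (Tser a) ^ (j+1) := by
    rw [Gser, Finset.mul_sum]
    apply Finset.sum_congr rfl
    intro j _
    ring
  rw [add_mul, one_mul, hTG, Finset.sum_range_succ]
  rw [Gser, Fser, Finset.sum_range_succ', Finset.sum_range_succ']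
  have hsum : ∑ j ∈ Finset.range M, PowerSeries.C (gbinom (p-1) (j+1)) * (Tser a)^(j+1)
      + ∑ j ∈ Finset.range M, PowerSeries.C (gbinom (p-1) j) * (Tser a)^(j+1)
      = ∑ j ∈ Finset.range M, PowerSeries.C (gbinom p (j+1)) * (Tser a)^(j+1) := by
    rw [← Finset.sum_add_distrib]
    apply Finset.sum_congr rfl
    intro j _
    rw [gbinom_pascal p j, map_add]
    ring
  rw [gbinom_zero, gbinom_zero]
  linear_combination hsum

lemma coeff_mul_T_pow_high (a : ℕ → ℝ) (S : PowerSeries ℝ) {m n : ℕ} (h : m < n) :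
    PowerSeries.coeff m (S * (Tser a) ^ n) = 0 := by
  have h1 : (PowerSeries.X : PowerSeries ℝ) ^ n ∣ S * (Tser a) ^ n :=
    Dvd.dvd.mul_left (pow_dvd_pow_of_dvd (X_dvd_Tser a) n) S
  exact PowerSeries.X_pow_dvd_iff.mp h1 m h

lemma coeff_one_add_T (a : ℕ → ℝ) (k : ℕ) :
    PowerSeries.coeff k (1 + Tser a) = if k = 0 then 1 else a k := by
  rw [map_add, PowerSeries.coeff_one, Tser, PowerSeries.coeff_mk]
  split_ifs <;> simp

lemma coeff_derivativeFun' (f : PowerSeries ℝ) (n : ℕ) :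
    PowerSeries.coeff n (PowerSeries.derivativeFun f) = PowerSeries.coeff (n + 1) f * (n + 1) :=
  PowerSeries.coeff_derivative f n

lemma cc_recurrence (a : ℕ → ℝ) (p : ℝ) (m : ℕ) :
    ((m : ℝ) + 1) * cc a p (m + 1)
      = ∑ k ∈ Finset.Icc 1 (m + 1), ((k : ℝ) * (1 + p) - ((m : ℝ) + 1)) * a k
          * cc a p (m + 1 - k) := by
  -- the key power series identity
  have hkey : (1 + Tser a) * PowerSeries.derivativeFun (Fser a p (m + 1))
      = PowerSeries.C p * PowerSeries.derivativeFun (Tser a) * Fser a p m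
        + PowerSeries.C p * PowerSeries.derivativeFun (Tser a)
          * (PowerSeries.C (gbinom (p - 1) m) * (Tser a) ^ (m + 1)) := by
    rw [dFser_eq]
    calc (1 + Tser a) * (PowerSeries.C p * PowerSeries.derivativeFun (Tser a) * Gser a p m)
        = PowerSeries.C p * PowerSeries.derivativeFun (Tser a)
            * ((1 + Tser a) * Gser a p m) := by ring
      _ = _ := by rw [one_add_T_mul_Gser]; ring
  have hE := congrArg (PowerSeries.coeff m) hkey
  -- LHS of hE
  have hL : PowerSeries.coeff m ((1 + Tser a) * PowerSeries.derivativeFun (Fser a p (m + 1)))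
      = ∑ k ∈ Finset.range (m + 1),
          (if k = 0 then 1 else a k) * (cc a p (m - k + 1) * ((m - k : ℕ) + 1 : ℝ)) := by
    rw [PowerSeries.coeff_mul, Finset.Nat.sum_antidiagonal_eq_sum_range_succ_mk]
    apply Finset.sum_congr rfl
    intro k hk
    rw [coeff_one_add_T, coeff_derivativeFun',
      coeff_Fser a p (show m - k + 1 ≤ m + 1 by omega)]
    try push_cast
    try ring
  -- first summand of RHS
  have hR1 : PowerSeries.coeff m
        (PowerSeries.C p * PowerSeries.derivativeFun (Tser a) * Fser a p m)
      = p * ∑ k ∈ Finset.range (m + 1), (a (k + 1) * ((k : ℕ) + 1 : ℝ)) * cc a p (m - k) := by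
    rw [mul_assoc, PowerSeries.coeff_C_mul, PowerSeries.coeff_mul,
      Finset.Nat.sum_antidiagonal_eq_sum_range_succ_mk]
    congr 1
    apply Finset.sum_congr rfl
    intro k hk
    rw [coeff_derivativeFun', coeff_Fser a p (show m - k ≤ m by omega)]
    have : PowerSeries.coeff (k + 1) (Tser a) = a (k + 1) := by
      rw [Tser, PowerSeries.coeff_mk]
      simp
    rw [this]
    try push_cast
    try ring
  -- second summand of RHS vanishes
  have hR2 : PowerSeries.coeff m
        (PowerSeries.C p * PowerSeries.derivativeFun (Tser a)
          * (PowerSeries.C (gbinom (p - 1) m) * (Tser a) ^ (m + 1))) = 0 := by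
    have hre : PowerSeries.C p * PowerSeries.derivativeFun (Tser a)
          * (PowerSeries.C (gbinom (p - 1) m) * (Tser a) ^ (m + 1))
        = (PowerSeries.C p * PowerSeries.derivativeFun (Tser a)
            * PowerSeries.C (gbinom (p - 1) m)) * (Tser a) ^ (m + 1) := by ring
    rw [hre]
    exact coeff_mul_T_pow_high a _ (by omega)
  rw [hL, map_add, hR1, hR2, add_zero] at hE
  -- split off the k = 0 term of the left sum
  rw [Finset.sum_range_succ'] at hE
  simp only [Nat.succ_ne_zero, if_false, if_true, Nat.sub_zero, one_mul] at hE
  -- canonical forms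
  have hA : ∑ k ∈ Finset.range m,
        a (k + 1) * (cc a p (m - (k + 1) + 1) * ((m - (k + 1) : ℕ) + 1 : ℝ))
      = ∑ k ∈ Finset.range m, a (k + 1) * cc a p (m - k) * ((m : ℝ) - (k : ℝ)) := by
    apply Finset.sum_congr rfl
    intro k hk
    rw [Finset.mem_range] at hk
    have h1 : m - (k + 1) + 1 = m - k := by omega
    have h2 : ((m - (k + 1) : ℕ) : ℝ) = (m : ℝ) - (k : ℝ) - 1 := by
      rw [Nat.cast_sub (by omega)]
      push_cast
      ring
    rw [h1, h2]
    ring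
  rw [hA] at hE
  -- rewrite target
  rw [← Finset.Ico_add_one_right_eq_Icc, Finset.sum_Ico_eq_sum_range]
  have hgoal : ∑ k ∈ Finset.range (m + 1 + 1 - 1),
        (((1 + k : ℕ) : ℝ) * (1 + p) - ((m : ℝ) + 1)) * a (1 + k) * cc a p (m + 1 - (1 + k))
      = p * ∑ k ∈ Finset.range (m + 1), (a (k + 1) * ((k : ℕ) + 1 : ℝ)) * cc a p (m - k)
        + ∑ k ∈ Finset.range (m + 1), ((k : ℝ) - (m : ℝ)) * a (k + 1) * cc a p (m - k) := by
    rw [Finset.mul_sum, ← Finset.sum_add_distrib]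
    have hrange : m + 1 + 1 - 1 = m + 1 := by omega
    rw [hrange]
    apply Finset.sum_congr rfl
    intro k hk
    have h1 : m + 1 - (1 + k) = m - k := by omega
    have h2 : 1 + k = k + 1 := by omega
    rw [h1, h2]
    push_cast
    ring
  rw [hgoal]
  have hsgn : ∑ k ∈ Finset.range (m + 1), ((k : ℝ) - (m : ℝ)) * a (k + 1) * cc a p (m - k)
      = - ∑ k ∈ Finset.range m, a (k + 1) * cc a p (m - k) * ((m : ℝ) - (k : ℝ)) := by
    rw [Finset.sum_range_succ]
    have hlast : ((m : ℝ) - (m : ℝ)) * a (m + 1) * cc a p (m - m) = 0 := by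
      simp
    rw [hlast, add_zero, ← Finset.sum_neg_distrib]
    apply Finset.sum_congr rfl
    intro k _
    ring
  rw [hsgn]
  linear_combination hE

-- evaluation of a truncation at x⁻¹, for x > 0
lemma eval_inv_trunc (f : PowerSeries ℝ) (N : ℕ) (x : ℝ) (hx : 0 < x) :
    Polynomial.eval x⁻¹ (PowerSeries.trunc (N + 1) f)
      = ∑ n ∈ Finset.range (N + 1), (PowerSeries.coeff n f) * x ^ (-(n : ℤ)) := by
  rw [Polynomial.eval_eq_sum_range' (PowerSeries.natDegree_trunc_lt f N)]
  apply Finset.sum_congr rfl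
  intro n hn
  rw [Finset.mem_range] at hn
  rw [PowerSeries.coeff_trunc, if_pos hn]
  congr 1
  rw [zpow_neg, zpow_natCast, inv_pow]

-- a polynomial evaluated at x⁻¹ is O(1) at infinity
lemma poly_eval_inv_isBigO_one (Q : Polynomial ℝ) :
    (fun x : ℝ => Q.eval x⁻¹) =O[atTop] (fun _ => (1 : ℝ)) := by
  have h : Filter.Tendsto (fun x : ℝ => Q.eval x⁻¹) atTop (nhds (Q.eval 0)) :=
    (Q.continuous.tendsto 0).comp tendsto_inv_atTop_zero
  exact h.isBigO_one ℝ

lemma poly_eval_inv_isBigO (Q : Polynomial ℝ) (N : ℕ)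
    (h : (Polynomial.X : Polynomial ℝ) ^ (N + 1) ∣ Q) :
    (fun x : ℝ => Q.eval x⁻¹) =O[atTop] fun x : ℝ => x ^ (-((N : ℤ) + 1)) := by
  obtain ⟨E, hE⟩ := h
  have h1 : (fun x : ℝ => Q.eval x⁻¹)
      =ᶠ[atTop] fun x : ℝ => x ^ (-((N : ℤ) + 1)) * E.eval x⁻¹ := by
    filter_upwards [eventually_gt_atTop (0:ℝ)] with x hx
    rw [hE, Polynomial.eval_mul, Polynomial.eval_pow, Polynomial.eval_X]
    congr 1
    rw [show -((N : ℤ) + 1) = -((N + 1 : ℕ) : ℤ) by push_cast; ring,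
      zpow_neg, zpow_natCast, inv_pow]
  calc (fun x : ℝ => Q.eval x⁻¹)
      =O[atTop] fun x : ℝ => x ^ (-((N : ℤ) + 1)) * E.eval x⁻¹ := h1.isBigO
    _ =O[atTop] fun x : ℝ => x ^ (-((N : ℤ) + 1)) * 1 :=
        (isBigO_refl (fun x : ℝ => x ^ (-((N : ℤ) + 1))) atTop).mul
          (poly_eval_inv_isBigO_one E)
    _ = fun x : ℝ => x ^ (-((N : ℤ) + 1)) := by funext x; rw [mul_one]

lemma trunc_mul_dvd (a : ℕ → ℝ) (N j : ℕ) :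
    (Polynomial.X : Polynomial ℝ) ^ (N + 1) ∣
      (PowerSeries.trunc (N + 1) (Tser a) * PowerSeries.trunc (N + 1) ((Tser a) ^ j)
        - PowerSeries.trunc (N + 1) ((Tser a) ^ (j + 1))) := by
  rw [Polynomial.X_pow_dvd_iff]
  intro d hd
  rw [Polynomial.coeff_sub, PowerSeries.coeff_trunc, if_pos hd]
  have h1 : (PowerSeries.trunc (N + 1) (Tser a) * PowerSeries.trunc (N + 1) ((Tser a) ^ j)).coeff d
      = PowerSeries.coeff d ((Tser a) * (Tser a) ^ j) := by
    rw [PowerSeries.coeff_mul_eq_coeff_trunc_mul_trunc₂ (Tser a) ((Tser a)^j) hd hd,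
      ← Polynomial.coeff_coe, Polynomial.coe_mul]
  rw [h1, ← pow_succ']
  ring

lemma expand_pow (g : ℝ → ℝ) (a : ℕ → ℝ) (ha0 : a 0 = 1) (N : ℕ)
    (hgN : (fun x : ℝ => g x - ∑ n ∈ Finset.range (N + 1), a n * x ^ (-(n : ℤ)))
      =O[atTop] fun x : ℝ => x ^ (-((N : ℤ) + 1)))
    (hh1 : (fun x : ℝ => g x - 1) =O[atTop] (fun _ => (1 : ℝ))) :
    ∀ j : ℕ, (fun x : ℝ => (g x - 1) ^ j
        - Polynomial.eval x⁻¹ (PowerSeries.trunc (N + 1) ((Tser a) ^ j)))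
      =O[atTop] fun x : ℝ => x ^ (-((N : ℤ) + 1)) := by
  have hP : (fun x : ℝ => (g x - 1)
      - Polynomial.eval x⁻¹ (PowerSeries.trunc (N + 1) (Tser a)))
      =O[atTop] fun x : ℝ => x ^ (-((N : ℤ) + 1)) := by
    apply hgN.congr' _ EventuallyEq.rfl
    filter_upwards [eventually_gt_atTop (0:ℝ)] with x hx
    rw [eval_inv_trunc _ _ _ hx]
    have hsum : ∑ n ∈ Finset.range (N + 1), a n * x ^ (-(n : ℤ))
        - ∑ n ∈ Finset.range (N + 1), (PowerSeries.coeff n (Tser a)) * x ^ (-(n : ℤ)) = 1 := by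
      rw [← Finset.sum_sub_distrib]
      rw [Finset.sum_eq_single 0]
      · simp [Tser, PowerSeries.coeff_mk, ha0]
      · intro n _ hn
        simp [Tser, PowerSeries.coeff_mk, hn]
      · simp
    linarith [hsum]
  intro j
  induction j with
  | zero =>
    simp only [pow_zero, PowerSeries.trunc_one, Polynomial.eval_one, sub_self]
    exact isBigO_zero _ _
  | succ j IH =>
    have hkey : (fun x : ℝ => (g x - 1) ^ (j + 1)
        - Polynomial.eval x⁻¹ (PowerSeries.trunc (N + 1) ((Tser a) ^ (j + 1))))
      = (fun x : ℝ => (g x - 1) * ((g x - 1) ^ j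
            - Polynomial.eval x⁻¹ (PowerSeries.trunc (N + 1) ((Tser a) ^ j)))
          + (((g x - 1) - Polynomial.eval x⁻¹ (PowerSeries.trunc (N + 1) (Tser a)))
              * Polynomial.eval x⁻¹ (PowerSeries.trunc (N + 1) ((Tser a) ^ j))
            + Polynomial.eval x⁻¹ (PowerSeries.trunc (N + 1) (Tser a)
                * PowerSeries.trunc (N + 1) ((Tser a) ^ j)
                - PowerSeries.trunc (N + 1) ((Tser a) ^ (j + 1))))) := by
      funext x
      rw [Polynomial.eval_sub, Polynomial.eval_mul]
      ring
    rw [hkey]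
    have h1 := hh1.mul IH
    simp only [one_mul] at h1
    have h2 := hP.mul (poly_eval_inv_isBigO_one (PowerSeries.trunc (N + 1) ((Tser a) ^ j)))
    simp only [mul_one] at h2
    have h3 := poly_eval_inv_isBigO _ N (trunc_mul_dvd a N j)
    exact h1.add (h2.add h3)

lemma cc_eq_sum (a : ℕ → ℝ) (p : ℝ) {n M : ℕ} (h : n ≤ M) :
    cc a p n = ∑ j ∈ Finset.range (M + 1), gbinom p j * tt a j n := by
  rw [cc]
  apply Finset.sum_subset (Finset.range_subset_range.mpr (by omega))
  intro j hj2 hj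
  rw [tt_eq_zero a (show n < j by simp at hj; omega), mul_zero]

/-- transformation of asymptotic expansions under real powers
(Lemma 1 in the paper). -/
theorem exponent_of_asymptotic_expansion
    (g : ℝ → ℝ) (a : ℕ → ℝ) (ha0 : a 0 = 1)
    (hg : ∀ N : ℕ,
      (fun x : ℝ => g x - ∑ n ∈ Finset.range (N + 1), a n * x ^ (-(n : ℤ)))
        =O[atTop] fun x : ℝ => x ^ (-((N : ℤ) + 1)))
    (p : ℝ) (b : ℕ → ℝ) (hb0 : b 0 = 1)
    (hb : ∀ n : ℕ, 1 ≤ n →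
      b n = (1 / (n : ℝ)) *
        ∑ k ∈ Finset.Icc 1 n, ((k : ℝ) * (1 + p) - (n : ℝ)) * a k * b (n - k)) :
    ∀ N : ℕ,
      (fun x : ℝ => g x ^ p - ∑ n ∈ Finset.range (N + 1), b n * x ^ (-(n : ℤ)))
        =O[atTop] fun x : ℝ => x ^ (-((N : ℤ) + 1)) := by
  -- b agrees with the canonical coefficients
  have hbc : ∀ n, b n = cc a p n := by
    intro n
    induction n using Nat.strong_induction_on with
    | _ n IH =>
      match n with
      | 0 => rw [hb0, cc_zero]
      | (m + 1) =>
        rw [hb (m + 1) (by omega)]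
        have hsum : ∑ k ∈ Finset.Icc 1 (m + 1),
              ((k : ℝ) * (1 + p) - ((m + 1 : ℕ) : ℝ)) * a k * b (m + 1 - k)
            = ∑ k ∈ Finset.Icc 1 (m + 1),
              ((k : ℝ) * (1 + p) - ((m : ℝ) + 1)) * a k * cc a p (m + 1 - k) := by
          apply Finset.sum_congr rfl
          intro k hk
          rw [Finset.mem_Icc] at hk
          rw [IH (m + 1 - k) (by omega)]
          push_cast
          ring
        rw [hsum, ← cc_recurrence a p m]
        have hne : ((m : ℝ) + 1) ≠ 0 := by positivity
        push_cast
        field_simp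
  intro N
  -- basic asymptotics of h = g - 1
  have hh : (fun x : ℝ => g x - 1) =O[atTop] fun x : ℝ => x ^ (-1 : ℤ) := by
    have := hg 0
    simp only [Finset.sum_range_one, ha0, Nat.cast_zero, neg_zero, zpow_zero, mul_one] at this
    convert this using 2 <;> norm_num [ha0]
  have htend : Filter.Tendsto (fun x : ℝ => g x - 1) atTop (nhds 0) :=
    hh.trans_tendsto (tendsto_zpow_atTop_zero (by norm_num))
  have hh1 : (fun x : ℝ => g x - 1) =O[atTop] (fun _ => (1 : ℝ)) :=
    hh.trans ((tendsto_zpow_atTop_zero (show (-1:ℤ) < 0 by norm_num)).isBigO_one ℝ)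
  -- the Taylor expansion of (1+u)^p composed with u = g - 1
  have htay := (rpow_taylor N p).comp_tendsto htend
  simp only [Function.comp_def] at htay
  simp only [show ∀ x : ℝ, 1 + (g x - 1) = g x from fun x => by ring] at htay
  -- remainder bound
  have hrem : (fun x : ℝ => (g x - 1) ^ (N + 1)) =O[atTop]
      fun x : ℝ => x ^ (-((N : ℤ) + 1)) := by
    have hp := hh.pow (N + 1)
    have heq : ∀ x : ℝ, (x ^ (-1 : ℤ)) ^ (N + 1) = x ^ (-((N : ℤ) + 1)) := by
      intro x
      rw [zpow_neg_one, inv_pow, ← zpow_natCast, ← zpow_neg]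
      congr 1
      try push_cast
      try ring
    exact hp.congr (fun x => rfl) heq
  have hT1 := htay.trans hrem
  -- expansions of powers
  have hT2 := IsBigO.fun_sum (fun j (_ : j ∈ Finset.range (N + 1)) =>
    ((expand_pow g a ha0 N (hg N) hh1 j).const_mul_left (gbinom p j)))
  -- the polynomial collecting all coefficients
  set Qbig : Polynomial ℝ := ∑ j ∈ Finset.range (N + 1),
    Polynomial.C (gbinom p j) * PowerSeries.trunc (N + 1) ((Tser a) ^ j) with hQbig
  have hQeval : ∀ x : ℝ, 0 < x → Polynomial.eval x⁻¹ Qbig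
      = ∑ n ∈ Finset.range (N + 1), cc a p n * x ^ (-(n : ℤ)) := by
    intro x hx
    rw [hQbig, Polynomial.eval_finset_sum]
    have h1 : ∀ j ∈ Finset.range (N + 1),
        Polynomial.eval x⁻¹ (Polynomial.C (gbinom p j) * PowerSeries.trunc (N + 1) ((Tser a) ^ j))
          = ∑ n ∈ Finset.range (N + 1), gbinom p j * tt a j n * x ^ (-(n : ℤ)) := by
      intro j _
      rw [Polynomial.eval_mul, Polynomial.eval_C, eval_inv_trunc _ _ _ hx, Finset.mul_sum]
      apply Finset.sum_congr rfl
      intro n _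
      rw [tt]
      ring
    rw [Finset.sum_congr rfl h1, Finset.sum_comm]
    apply Finset.sum_congr rfl
    intro n hn
    rw [Finset.mem_range] at hn
    rw [cc_eq_sum a p (show n ≤ N by omega), Finset.sum_mul]
  -- decompose the target
  have hdecomp : (fun x : ℝ => g x ^ p - ∑ n ∈ Finset.range (N + 1), b n * x ^ (-(n : ℤ)))
      =ᶠ[atTop] fun x : ℝ =>
        (g x ^ p - ∑ j ∈ Finset.range (N + 1), gbinom p j * (g x - 1) ^ j)
        + ∑ j ∈ Finset.range (N + 1), gbinom p j * ((g x - 1) ^ j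
            - Polynomial.eval x⁻¹ (PowerSeries.trunc (N + 1) ((Tser a) ^ j))) := by
    filter_upwards [eventually_gt_atTop (0:ℝ)] with x hx
    have hb' : ∑ n ∈ Finset.range (N + 1), b n * x ^ (-(n : ℤ))
        = ∑ n ∈ Finset.range (N + 1), cc a p n * x ^ (-(n : ℤ)) := by
      apply Finset.sum_congr rfl
      intro n _
      rw [hbc n]
    rw [hb', ← hQeval x hx, hQbig, Polynomial.eval_finset_sum]
    have h2 : ∀ j ∈ Finset.range (N + 1),
        Polynomial.eval x⁻¹ (Polynomial.C (gbinom p j) * PowerSeries.trunc (N + 1) ((Tser a) ^ j))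
          = gbinom p j * Polynomial.eval x⁻¹ (PowerSeries.trunc (N + 1) ((Tser a) ^ j)) := by
      intro j _
      rw [Polynomial.eval_mul, Polynomial.eval_C]
    have h3 : ∑ j ∈ Finset.range (N + 1), gbinom p j * ((g x - 1) ^ j
          - Polynomial.eval x⁻¹ (PowerSeries.trunc (N + 1) ((Tser a) ^ j)))
        = ∑ j ∈ Finset.range (N + 1), gbinom p j * (g x - 1) ^ j
          - ∑ j ∈ Finset.range (N + 1),
              gbinom p j * Polynomial.eval x⁻¹ (PowerSeries.trunc (N + 1) ((Tser a) ^ j)) := by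
      rw [← Finset.sum_sub_distrib]
      apply Finset.sum_congr rfl
      intros
      ring
    rw [h3, Finset.sum_congr rfl h2]
    ring
  exact IsBigO.congr' (hT1.add hT2) hdecomp.symm EventuallyEq.rfl
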